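/- Let α ∈ (0,1] and let g : ℕ^E → ℝ be α-weakly submodular. Then for all x, y ∈ ℕ^E, Σ_{e∈E} y(e)·(g(x + χ_e) − g(x)) ≥ α·(g(x + y) − g(x)). (Sum of unit marginals above x dominates α times the marginal of y above x.) -/
import Mathlib


/-- For an α-weakly submodular g, the sum of unit marginals above x dominates
α times the marginal of y above x. -/
theorem stmt_7 {E : Type*} [Fintype E] [DecidableEq E]
    (α : ℝ) (hα0 : 0 < α) (hα1 : α ≤ 1)
    (g : (E → ℕ) → ℝ)
    (hws : ∀ s t : E → ℕ, s ≤ t → ∀ e : E,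
      α * (g (t + Pi.single e 1) - g t) ≤ g (s + Pi.single e 1) - g s)
    (x y : E → ℕ) :
    ∑ e, (y e : ℝ) * (g (x + Pi.single e 1) - g x) ≥ α * (g (x + y) - g x) := by
  suffices h : ∀ n : ℕ, ∀ y : E → ℕ, ∑ e, y e = n →
      α * (g (x + y) - g x) ≤ ∑ e, (y e : ℝ) * (g (x + Pi.single e 1) - g x) from
    h (∑ e, y e) y rfl
  intro n
  induction n with
  | zero =>
    intro y hy
    have hy0 : y = 0 := by
      funext e
      have := (Finset.sum_eq_zero_iff.mp hy) e (Finset.mem_univ e)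
      simpa using this
    subst hy0
    simp
  | succ n ih =>
    intro y hy
    have hpos : ∃ e, 0 < y e := by
      by_contra h
      push_neg at h
      have : ∑ e, y e = 0 := Finset.sum_eq_zero fun e _ => Nat.le_zero.mp (h e)
      omega
    obtain ⟨e, he⟩ := hpos
    set y' : E → ℕ := Function.update y e (y e - 1) with hy'
    have hup : y' + Pi.single e 1 = y := by
      funext a
      by_cases ha : a = e
      · subst ha
        simp [hy', Pi.add_apply]
        omega
      · simp [hy', Pi.add_apply, Function.update_of_ne ha, Pi.single_eq_of_ne ha]
    have hsum' : ∑ a, y' a = n := by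
      have : ∑ a, y a = ∑ a, y' a + 1 := by
        rw [← hup]
        simp [Finset.sum_add_distrib]
      omega
    have hIH := ih y' hsum'
    have hle : x ≤ x + y' := le_add_of_nonneg_right (by intro a; simp)
    have hstep := hws x (x + y') hle e
    have hrsum : ∑ a, (y a : ℝ) * (g (x + Pi.single a 1) - g x) =
        ∑ a, (y' a : ℝ) * (g (x + Pi.single a 1) - g x) +
          (g (x + Pi.single e 1) - g x) := by
      rw [← hup]
      simp only [Pi.add_apply, Nat.cast_add, add_mul, Finset.sum_add_distrib]
      congr 1
      rw [Finset.sum_eq_single e]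
      · simp
      · intro b _ hb
        simp [Pi.single_eq_of_ne hb]
      · simp
    have hxy : x + y = (x + y') + Pi.single e 1 := by
      rw [← hup]; funext a; simp [Pi.add_apply]; ring
    rw [hrsum, hxy]
    have : α * (g (x + y' + Pi.single e 1) - g x) =
        α * (g (x + y' + Pi.single e 1) - g (x + y')) + α * (g (x + y') - g x) := by
      ring
    rw [this]
    exact add_le_add hstep hIH |>.trans_eq (add_comm _ _)
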